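/- Every tree with at least two vertices that has no automorphism of order 2 contains at least two vertices of even degree. -/

import Mathlib

private lemma swap_aux {V : Type*} [Fintype V] [DecidableEq V] (H : SimpleGraph V)
    [DecidableRel H.Adj] {a b c d : V} (hab : a ≠ b)
    (ha : H.neighborFinset a = {c}) (hb : H.neighborFinset b = {d})
    (hcd : Equiv.swap a b c = d) :
    ∃ ρ : H ≃g H, (∀ v, ρ (ρ v) = v) ∧ ρ a = b := by
  have hA : ∀ y, H.Adj a y ↔ y = c := by
    intro y; rw [← SimpleGraph.mem_neighborFinset, ha, Finset.mem_singleton]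
  have hB : ∀ y, H.Adj b y ↔ y = d := by
    intro y; rw [← SimpleGraph.mem_neighborFinset, hb, Finset.mem_singleton]
  have hac : H.Adj a c := (hA c).mpr rfl
  have hbd : H.Adj b d := (hB d).mpr rfl
  have hdc : Equiv.swap a b d = c := by rw [← hcd, Equiv.swap_apply_self]
  have key : ∀ x y, H.Adj x y → H.Adj (Equiv.swap a b x) (Equiv.swap a b y) := by
    intro x y hxy
    rcases eq_or_ne x a with rfl | hxa
    · have hyc : y = c := (hA y).mp hxy
      subst hyc
      rw [Equiv.swap_apply_left, hcd]
      exact hbd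
    rcases eq_or_ne x b with rfl | hxb
    · have hyd : y = d := (hB y).mp hxy
      subst hyd
      rw [Equiv.swap_apply_right, hdc]
      exact hac
    rcases eq_or_ne y a with hya | hya
    · have hxc : x = c := (hA x).mp (by rw [← hya]; exact hxy.symm)
      rw [hxc] at hxa hxb
      have hcd' : c = d := by rw [← hcd, Equiv.swap_apply_of_ne_of_ne hxa hxb]
      rw [hxc, hya, Equiv.swap_apply_of_ne_of_ne hxa hxb, Equiv.swap_apply_left, hcd']
      exact hbd.symm
    rcases eq_or_ne y b with hyb | hyb
    · have hxd : x = d := (hB x).mp (by rw [← hyb]; exact hxy.symm)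
      rw [hxd] at hxa hxb
      have hdc' : d = c := by rw [← hdc, Equiv.swap_apply_of_ne_of_ne hxa hxb]
      rw [hxd, hyb, Equiv.swap_apply_of_ne_of_ne hxa hxb, Equiv.swap_apply_right, hdc']
      exact hac.symm
    · rw [Equiv.swap_apply_of_ne_of_ne hxa hxb, Equiv.swap_apply_of_ne_of_ne hya hyb]
      exact hxy
  refine ⟨⟨Equiv.swap a b, ?_⟩, ?_, ?_⟩
  · intro x y
    constructor
    · intro h
      have h2 := key _ _ h
      simpa [Equiv.swap_apply_self] using h2
    · exact key x y
  · intro v; exact Equiv.swap_apply_self a b v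
  · exact Equiv.swap_apply_left a b

/-- Every tree with at least two vertices and no automorphism of order 2 has at
least two vertices of even degree. -/
theorem stmt_5 {V : Type*} [Fintype V] [DecidableEq V] (H : SimpleGraph V)
    [DecidableRel H.Adj]
    (htree : H.IsTree) (hcard : 2 ≤ Fintype.card V)
    (hinv : ∀ ρ : H ≃g H, (∀ v, ρ (ρ v) = v) → ∀ v, ρ v = v) :
    ∃ u v : V, u ≠ v ∧ Even (H.degree u) ∧ Even (H.degree v) := by
  by_contra hcon
  push_neg at hcon
  have hone : ∀ u v : V, Even (H.degree u) → Even (H.degree v) → u = v := by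
    intro u v hu hv
    by_contra hne
    exact (hcon u v hne hu) hv
  have hconn := htree.isConnected
  -- every vertex has a neighbor
  have hex : ∀ v : V, ∃ w, H.Adj v w := by
    intro v
    obtain ⟨w, hw⟩ := Fintype.exists_ne_of_one_lt_card (by omega) v
    obtain ⟨p⟩ := hconn.preconnected v w
    cases p with
    | nil => exact absurd rfl hw
    | cons h q => exact ⟨_, h⟩
  obtain ⟨f, hf⟩ : ∃ f : V → V, ∀ v, H.Adj v (f v) :=
    ⟨fun v => (hex v).choose, fun v => (hex v).choose_spec⟩
  -- unique neighbor of a leaf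
  have single_nbr : ∀ {v w : V}, H.degree v = 1 → H.Adj v w →
      H.neighborFinset v = {w} := by
    intro v w h1 hadj
    obtain ⟨c, hc⟩ := Finset.card_eq_one.mp
      (by rw [H.card_neighborFinset_eq_degree, h1])
    have hwc : w = c := by
      have hm := (SimpleGraph.mem_neighborFinset H v w).mpr hadj
      rw [hc, Finset.mem_singleton] at hm
      exact hm
    rw [hc, hwc]
  set leaves := Finset.univ.filter (fun v => H.degree v = 1) with hleavesdef
  set rest := Finset.univ.filter (fun v => ¬ H.degree v = 1) with hrestdef
  -- counting: rest.card < leaves.card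
  have hsum : ∑ v, H.degree v = 2 * H.edgeFinset.card :=
    H.sum_degrees_eq_twice_card_edges
  have hec : H.edgeFinset.card + 1 = Fintype.card V := htree.card_edgeFinset
  have hsplit : (∑ v ∈ leaves, H.degree v) + (∑ v ∈ rest, H.degree v)
      = ∑ v, H.degree v :=
    Finset.sum_filter_add_sum_filter_not _ _ _
  have hLsum : ∑ v ∈ leaves, H.degree v = leaves.card := by
    rw [Finset.sum_congr rfl (fun v hv => (Finset.mem_filter.mp hv).2)]
    simp
    rfl
  have hind : (rest.filter (fun v => Even (H.degree v))).card ≤ 1 := by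
    apply Finset.card_le_one.mpr
    intro u hu v hv
    exact hone u v (Finset.mem_filter.mp hu).2 (Finset.mem_filter.mp hv).2
  have hpoint : ∀ v ∈ rest, 3 ≤ H.degree v + (if Even (H.degree v) then 1 else 0) := by
    intro v hv
    have h1 : ¬ H.degree v = 1 := (Finset.mem_filter.mp hv).2
    have h0 : 0 < H.degree v := H.degree_pos_iff_exists_adj v |>.mpr (hex v)
    by_cases he : Even (H.degree v)
    · rw [Nat.even_iff] at he
      simp only [Nat.even_iff, he, if_pos]
      omega
    · rw [Nat.even_iff] at he
      simp only [Nat.even_iff, he, if_neg]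
      omega
  have hRsum : 3 * rest.card ≤ (∑ v ∈ rest, H.degree v) + 1 := by
    calc 3 * rest.card = ∑ _v ∈ rest, 3 := by rw [Finset.sum_const]; ring
    _ ≤ ∑ v ∈ rest, (H.degree v + if Even (H.degree v) then 1 else 0) :=
        Finset.sum_le_sum hpoint
    _ = (∑ v ∈ rest, H.degree v) + ∑ v ∈ rest, (if Even (H.degree v) then 1 else 0) :=
        Finset.sum_add_distrib
    _ ≤ (∑ v ∈ rest, H.degree v) + 1 := by
        rw [← Finset.card_filter]
        omega
  have hcardsplit : leaves.card + rest.card = Fintype.card V := by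
    rw [← Finset.card_univ]
    exact Finset.card_filter_add_card_filter_not _
  have hLR : rest.card < leaves.card := by omega
  -- does some leaf have a leaf neighbor?
  by_cases hla : ∃ a ∈ leaves, f a ∈ leaves
  · obtain ⟨a, haL, hbL⟩ := hla
    have haleaf : H.degree a = 1 := (Finset.mem_filter.mp haL).2
    have hbleaf : H.degree (f a) = 1 := (Finset.mem_filter.mp hbL).2
    have hab : a ≠ f a := H.ne_of_adj (hf a)
    have ha : H.neighborFinset a = {f a} := single_nbr haleaf (hf a)
    have hb : H.neighborFinset (f a) = {a} := single_nbr hbleaf (hf a).symm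
    obtain ⟨ρ, hρinv, hρa⟩ := swap_aux H hab ha hb (Equiv.swap_apply_right a (f a))
    have := hinv ρ hρinv a
    rw [hρa] at this
    exact hab this.symm
  · push_neg at hla
    have hmaps : ∀ a ∈ leaves, f a ∈ rest := by
      intro a haL
      refine Finset.mem_filter.mpr ⟨Finset.mem_univ _, ?_⟩
      intro h1
      exact hla a haL (Finset.mem_filter.mpr ⟨Finset.mem_univ (f a), h1⟩)
    obtain ⟨x, hx, y, hy, hxy, hfeq⟩ :=
      Finset.exists_ne_map_eq_of_card_lt_of_maps_to hLR hmaps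
    have hxleaf : H.degree x = 1 := (Finset.mem_filter.mp hx).2
    have hyleaf : H.degree y = 1 := (Finset.mem_filter.mp hy).2
    have ha : H.neighborFinset x = {f x} := single_nbr hxleaf (hf x)
    have hb : H.neighborFinset y = {f x} := by
      rw [hfeq]; exact single_nbr hyleaf (hf y)
    have hwx : f x ≠ x := (H.ne_of_adj (hf x)).symm
    have hwy : f x ≠ y := by rw [hfeq]; exact (H.ne_of_adj (hf y)).symm
    obtain ⟨ρ, hρinv, hρa⟩ := swap_aux H hxy ha hb
      (Equiv.swap_apply_of_ne_of_ne hwx hwy)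
    have := hinv ρ hρinv x
    rw [hρa] at this
    exact hxy this.symm
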